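/- The Hopf–Stiefel function a ∘ b = |IS(a) + IS(b)| satisfies the recursions: for a, b ≤ 2^n, a ∘ (2^n + b) = 2^n + a ∘ b, and (2^n + a) ∘ (2^n + b) = 2^{n+1}. -/

import Mathlib

open Finset Pointwise

/-- Encoding of the lexicographic order on `(ZMod 2)^n`. -/
def lexNat {n : ℕ} (x : Fin n → ZMod 2) : ℕ := ∑ i, (x i).val * 2 ^ (i : ℕ)

lemma lexNat_succ {m : ℕ} (x : Fin (m + 1) → ZMod 2) :
    lexNat x = 2 ^ m * (x (Fin.last m)).val + lexNat (fun i => x i.castSucc) := by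
  rw [lexNat, Fin.sum_univ_castSucc, lexNat]
  simp [Fin.coe_castSucc, Fin.val_last, mul_comm, add_comm]

lemma lexNat_lt {m : ℕ} (x : Fin m → ZMod 2) : lexNat x < 2 ^ m := by
  induction m with
  | zero => simp [lexNat]
  | succ m ih =>
    rw [lexNat_succ]
    have h1 : (x (Fin.last m)).val < 2 := (x (Fin.last m)).isLt
    have h2 := ih (fun i => x i.castSucc)
    have : 2 ^ (m + 1) = 2 ^ m * 2 := by ring
    nlinarith

lemma testBit_lexNat {m : ℕ} (x : Fin m → ZMod 2) (j : ℕ) :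
    (lexNat x).testBit j = if h : j < m then decide (x ⟨j, h⟩ = 1) else false := by
  induction m with
  | zero => simp [lexNat]
  | succ m ih =>
    rw [lexNat_succ, Nat.testBit_two_pow_mul_add _ (lexNat_lt _) j]
    by_cases h : j < m
    · simp only [h, if_true, ih]
      have h' : j < m + 1 := Nat.lt_succ_of_lt h
      simp [h, h']
    · simp only [h, if_false]
      rcases eq_or_lt_of_le (Nat.le_of_not_lt h) with rfl | h'
      · have hj : m < m + 1 := Nat.lt_succ_self m
        simp only [Nat.sub_self, hj, dif_pos, Nat.testBit_zero]
        have he : x ⟨m, hj⟩ = x (Fin.last m) := by congr 1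
        rw [he]
        rcases (show ∀ z : ZMod 2, z = 0 ∨ z = 1 by decide) (x (Fin.last m)) with hz | hz <;>
          simp [hz, ZMod.val] <;> rfl
      · have hj : ¬ j < m + 1 := by omega
        simp only [hj, dif_neg, not_false_iff]
        apply Nat.testBit_lt_two_pow
        calc (x (Fin.last m)).val < 2 := (x (Fin.last m)).isLt
        _ ≤ 2 ^ (j - m) := by
            have : 1 ≤ j - m := by omega
            calc (2:ℕ) = 2 ^ 1 := rfl
            _ ≤ 2 ^ (j - m) := Nat.pow_le_pow_right (by norm_num) this

lemma lexNat_inj {m : ℕ} : Function.Injective (lexNat (n := m)) := by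
  intro x y h
  funext i
  have := congrArg (fun t => Nat.testBit t i.val) h
  simp only [testBit_lexNat, i.isLt, dif_pos, Fin.eta] at this
  have h2 : (x i = 1) ↔ (y i = 1) := by
    constructor <;> intro hh <;> simp [hh] at this <;> exact this
  revert h2
  generalize x i = u; generalize y i = v
  revert u v; decide

lemma lexNat_add {m : ℕ} (x y : Fin m → ZMod 2) :
    lexNat (x + y) = lexNat x ^^^ lexNat y := by
  apply Nat.eq_of_testBit_eq
  intro j
  rw [Nat.testBit_xor, testBit_lexNat, testBit_lexNat, testBit_lexNat]
  by_cases h : j < m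
  · simp only [h, dif_pos, Pi.add_apply]
    rcases (show ∀ z : ZMod 2, z = 0 ∨ z = 1 by decide) (x ⟨j, h⟩) with hu | hu <;>
      rcases (show ∀ z : ZMod 2, z = 0 ∨ z = 1 by decide) (y ⟨j, h⟩) with hv | hv <;>
      simp only [hu, hv] <;> decide
  · simp [h]

lemma lexNat_surj {m t : ℕ} (ht : t < 2 ^ m) : ∃ x : Fin m → ZMod 2, lexNat x = t := by
  refine ⟨fun i => if t.testBit i.val then 1 else 0, ?_⟩
  apply Nat.eq_of_testBit_eq
  intro j
  rw [testBit_lexNat]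
  by_cases h : j < m
  · simp only [h, dif_pos]
    cases hb : t.testBit j <;> simp [hb]
  · simp only [h, dif_neg, not_false_iff]
    symm
    apply Nat.testBit_lt_two_pow
    calc t < 2 ^ m := ht
    _ ≤ 2 ^ j := Nat.pow_le_pow_right (by norm_num) (Nat.le_of_not_lt h)

/-- The `k` lexicographically smallest elements of `T`. -/
def initSeg {n : ℕ} (T : Finset (Fin n → ZMod 2)) (k : ℕ) : Finset (Fin n → ZMod 2) :=
  T.filter fun x => (T.filter fun y => lexNat y < lexNat x).card < k

/-- The Hopf–Stiefel function `a ∘ b = |IS(a) + IS(b)|`, computed in `(ZMod 2)^(a+b)`,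
a dimension large enough for the value to be the stable one. -/
def hs (a b : ℕ) : ℕ :=
  (initSeg (Finset.univ : Finset (Fin (a + b) → ZMod 2)) a + initSeg Finset.univ b).card

lemma image_filter_lt {m c : ℕ} (hc : c ≤ 2 ^ m) :
    ((Finset.univ : Finset (Fin m → ZMod 2)).filter fun x => lexNat x < c).image lexNat
      = Finset.range c := by
  ext t
  simp only [Finset.mem_image, Finset.mem_filter, Finset.mem_univ, true_and, Finset.mem_range]
  constructor
  · rintro ⟨x, hx, rfl⟩; exact hx
  · intro ht
    obtain ⟨x, hx⟩ := lexNat_surj (lt_of_lt_of_le ht hc)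
    exact ⟨x, by omega, hx⟩

lemma card_filter_lt {m : ℕ} (x : Fin m → ZMod 2) :
    ((Finset.univ : Finset (Fin m → ZMod 2)).filter fun y => lexNat y < lexNat x).card
      = lexNat x := by
  rw [← Finset.card_image_of_injective _ lexNat_inj,
    image_filter_lt (le_of_lt (lexNat_lt x)), Finset.card_range]

lemma initSeg_eq {m k : ℕ} :
    initSeg (Finset.univ : Finset (Fin m → ZMod 2)) k
      = Finset.univ.filter fun x => lexNat x < k := by
  unfold initSeg
  apply Finset.filter_congr
  intro x _
  rw [card_filter_lt]

lemma image_add {m : ℕ} (A B : Finset (Fin m → ZMod 2)) :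
    (A + B).image lexNat = Finset.image₂ (· ^^^ ·) (A.image lexNat) (B.image lexNat) := by
  ext t
  simp only [Finset.mem_image, Finset.mem_add, Finset.mem_image₂]
  constructor
  · rintro ⟨z, ⟨x, hx, y, hy, rfl⟩, rfl⟩
    exact ⟨lexNat x, ⟨x, hx, rfl⟩, lexNat y, ⟨y, hy, rfl⟩, (lexNat_add x y).symm⟩
  · rintro ⟨s, ⟨x, hx, rfl⟩, u, ⟨y, hy, rfl⟩, rfl⟩
    exact ⟨x + y, ⟨x, hx, y, hy, rfl⟩, lexNat_add x y⟩

/-- The xor model of the Hopf–Stiefel function. -/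
def g (a b : ℕ) : ℕ := (Finset.image₂ (· ^^^ ·) (Finset.range a) (Finset.range b)).card

lemma hs_eq_g (a b : ℕ) : hs a b = g a b := by
  have ha : a ≤ 2 ^ (a + b) :=
    le_of_lt (lt_of_lt_of_le (Nat.lt_two_pow_self (n := a)) (Nat.pow_le_pow_right (by norm_num) (by omega)))
  have hb : b ≤ 2 ^ (a + b) :=
    le_of_lt (lt_of_lt_of_le (Nat.lt_two_pow_self (n := b)) (Nat.pow_le_pow_right (by norm_num) (by omega)))
  rw [hs, g, ← Finset.card_image_of_injective _ lexNat_inj, _root_.image_add,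
    initSeg_eq, initSeg_eq, image_filter_lt ha, image_filter_lt hb]

lemma two_pow_xor {n t : ℕ} (ht : t < 2 ^ n) : 2 ^ n ^^^ t = 2 ^ n + t := by
  apply Nat.eq_of_testBit_eq
  intro j
  have h1 : 2 ^ n + t = 2 ^ n * 1 + t := by ring
  rw [Nat.testBit_xor, h1, Nat.testBit_two_pow_mul_add 1 ht j]
  rcases lt_trichotomy j n with h | rfl | h
  · simp [h, Nat.testBit_two_pow_of_ne (by omega : n ≠ j)]
  · simp [Nat.testBit_two_pow_self, Nat.testBit_lt_two_pow ht]
  · have hn : ¬ j < n := by omega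
    have htj : t < 2 ^ j := lt_of_lt_of_le ht (Nat.pow_le_pow_right (by norm_num) (by omega))
    have h1j : (1 : ℕ) < 2 ^ (j - n) := Nat.one_lt_two_pow_iff.mpr (by omega)
    simp [hn, Nat.testBit_two_pow_of_ne (by omega : n ≠ j), Nat.testBit_lt_two_pow htj,
      Nat.testBit_lt_two_pow h1j]

lemma range_two_pow_add (n b : ℕ) :
    Finset.range (2 ^ n + b) = Finset.range (2 ^ n) ∪ (Finset.range b).image (2 ^ n + ·) := by
  ext t
  simp only [Finset.mem_range, Finset.mem_union, Finset.mem_image]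
  constructor
  · intro h
    by_cases h' : t < 2 ^ n
    · exact Or.inl h'
    · exact Or.inr ⟨t - 2 ^ n, by omega, by omega⟩
  · rintro (h | ⟨u, hu, rfl⟩) <;> omega

lemma image₂_xor_low {a n : ℕ} (ha : 0 < a) (han : a ≤ 2 ^ n) :
    Finset.image₂ (· ^^^ ·) (Finset.range a) (Finset.range (2 ^ n)) = Finset.range (2 ^ n) := by
  ext t
  simp only [Finset.mem_image₂, Finset.mem_range]
  constructor
  · rintro ⟨s, hs, u, hu, rfl⟩
    exact Nat.xor_lt_two_pow (lt_of_lt_of_le hs han) hu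
  · intro ht
    exact ⟨0, ha, t, ht, by simp⟩

lemma xor_shift {s v n : ℕ} (hs : s < 2 ^ n) (hv : v < 2 ^ n) :
    s ^^^ (2 ^ n + v) = 2 ^ n + (s ^^^ v) := by
  rw [← two_pow_xor hv, ← two_pow_xor (Nat.xor_lt_two_pow hs hv),
    ← Nat.xor_assoc, Nat.xor_comm s (2 ^ n), Nat.xor_assoc]

lemma image₂_xor_shift {a b n : ℕ} (han : a ≤ 2 ^ n) (hbn : b ≤ 2 ^ n) :
    Finset.image₂ (· ^^^ ·) (Finset.range a) ((Finset.range b).image (2 ^ n + ·))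
      = (Finset.image₂ (· ^^^ ·) (Finset.range a) (Finset.range b)).image (2 ^ n + ·) := by
  ext t
  simp only [Finset.mem_image₂, Finset.mem_image, Finset.mem_range]
  constructor
  · rintro ⟨s, hs, u, ⟨v, hv, rfl⟩, rfl⟩
    exact ⟨s ^^^ v, ⟨s, hs, v, hv, rfl⟩,
      (xor_shift (lt_of_lt_of_le hs han) (lt_of_lt_of_le hv hbn)).symm⟩
  · rintro ⟨w, ⟨s, hs, v, hv, rfl⟩, rfl⟩
    exact ⟨s, hs, 2 ^ n + v, ⟨v, hv, rfl⟩,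
      xor_shift (lt_of_lt_of_le hs han) (lt_of_lt_of_le hv hbn)⟩

lemma g_low_rec {n a b : ℕ} (ha : 0 < a) (han : a ≤ 2 ^ n) (hbn : b ≤ 2 ^ n) :
    g a (2 ^ n + b) = 2 ^ n + g a b := by
  rw [g, range_two_pow_add, Finset.image₂_union_right, image₂_xor_low ha han,
    image₂_xor_shift han hbn]
  have hdisj : Disjoint (Finset.range (2 ^ n))
      ((Finset.image₂ (· ^^^ ·) (Finset.range a) (Finset.range b)).image (2 ^ n + ·)) := by
    rw [Finset.disjoint_left]
    rintro t ht hmem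
    rw [Finset.mem_image] at hmem
    obtain ⟨w, _, rfl⟩ := hmem
    rw [Finset.mem_range] at ht
    omega
  rw [Finset.card_union_of_disjoint hdisj, Finset.card_range,
    Finset.card_image_of_injective _ (add_right_injective _), g]

lemma g_high {n a b : ℕ} (ha : 0 < a) (hb : 0 < b) (han : a ≤ 2 ^ n) (hbn : b ≤ 2 ^ n) :
    g (2 ^ n + a) (2 ^ n + b) = 2 ^ (n + 1) := by
  have h2 : 2 ^ (n + 1) = 2 ^ n + 2 ^ n := by ring
  rw [g]
  have himg : Finset.image₂ (· ^^^ ·) (Finset.range (2 ^ n + a)) (Finset.range (2 ^ n + b))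
      = Finset.range (2 ^ (n + 1)) := by
    ext t
    simp only [Finset.mem_image₂, Finset.mem_range]
    constructor
    · rintro ⟨s, hs, u, hu, rfl⟩
      exact Nat.xor_lt_two_pow (by omega) (by omega)
    · intro ht
      by_cases h : t < 2 ^ n
      · exact ⟨0, by omega, t, by omega, by simp⟩
      · refine ⟨2 ^ n, by omega, t - 2 ^ n, by omega, ?_⟩
        rw [two_pow_xor (show t - 2 ^ n < 2 ^ n by omega)]
        omega
  rw [himg, Finset.card_range]

theorem stmt2 (n a b : ℕ) (ha : 0 < a) (hb : 0 < b) (han : a ≤ 2 ^ n) (hbn : b ≤ 2 ^ n) :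
    hs a (2 ^ n + b) = 2 ^ n + hs a b ∧ hs (2 ^ n + a) (2 ^ n + b) = 2 ^ (n + 1) := by
  refine ⟨?_, ?_⟩
  · rw [hs_eq_g, hs_eq_g, g_low_rec ha han hbn]
  · rw [hs_eq_g, g_high ha hb han hbn]
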